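/- (Matrix Tree Theorem) For any simple graph G on n ≥ 2 vertices and any vertex v of G, the number of spanning trees τ(G) equals the determinant of the (n−1)×(n−1) matrix obtained from the Laplacian matrix of G by deleting the row and the column indexed by v. -/

import Mathlib

namespace MTT
open SimpleGraph Matrix Finset

variable {n : ℕ}


def inc (w : Fin n) (e : Sym2 (Fin n)) : ℤ :=
  (if w = e.inf then 1 else 0) - (if w = e.sup then 1 else 0)

lemma inc_mk (a b w : Fin n) :
    inc w s(a, b) = (if w = a ⊓ b then 1 else 0) - (if w = a ⊔ b then 1 else 0) := by
  simp [inc]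
  rfl

def dsign (a b : Fin n) : ℤ := if a ≤ b then 1 else -1

lemma dsign_mul_inc {a b : Fin n} (hab : a ≠ b) (w : Fin n) :
    dsign a b * inc w s(a, b) = (if w = a then 1 else 0) - (if w = b then 1 else 0) := by
  rcases lt_or_gt_of_ne hab with h | h
  · rw [dsign, if_pos h.le, inc_mk, inf_eq_left.mpr h.le, sup_eq_right.mpr h.le, one_mul]
  · rw [dsign, if_neg (not_le.mpr h), inc_mk, inf_eq_right.mpr h.le, sup_eq_left.mpr h.le]
    ring

lemma walk_dart_sum {H : SimpleGraph (Fin n)} {a b : Fin n} (p : H.Walk a b) (w : Fin n) :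
    (p.darts.map (fun d => dsign d.fst d.snd * inc w d.edge)).sum
      = (if w = a then 1 else 0) - (if w = b then 1 else 0) := by
  induction p with
  | nil => simp
  | @cons u c b h q ih =>
    rw [Walk.darts_cons, List.map_cons, List.sum_cons, ih]
    have : (⟨(u, c), h⟩ : H.Dart).edge = s(u, c) := rfl
    rw [this]
    rw [dsign_mul_inc h.ne]
    ring

lemma sum_list_swap {ι α : Type*} [Fintype ι] (L : List α) (f : ι → α → ℤ) :
    ∑ i : ι, (L.map (f i)).sum = (L.map (fun a => ∑ i : ι, f i a)).sum := by
  induction L with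
  | nil => simp
  | cons a t ih => simp [Finset.sum_add_distrib, ih]

lemma sym2_mk_eq_sorted (a b : Fin n) : s(a, b) = s(a ⊓ b, a ⊔ b) := by
  rcases le_total a b with h | h
  · rw [inf_eq_left.mpr h, sup_eq_right.mpr h]
  · rw [inf_eq_right.mpr h, sup_eq_left.mpr h, Sym2.eq_swap]

lemma inf_ne_sup {a b : Fin n} (he : a ≠ b) : a ⊓ b ≠ a ⊔ b := by
  rcases lt_or_gt_of_ne he with h | h
  · rw [inf_eq_left.mpr h.le, sup_eq_right.mpr h.le]; exact he
  · rw [inf_eq_right.mpr h.le, sup_eq_left.mpr h.le]; exact (Ne.symm he)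

lemma inc_self_mul_self {e : Sym2 (Fin n)} (he : ¬ e.IsDiag) (u : Fin n) :
    inc u e * inc u e = if u ∈ e then 1 else 0 := by
  induction e using Sym2.ind with
  | _ a b =>
    rw [Sym2.mk_isDiag_iff] at he
    have hxy := inf_ne_sup he
    have hmem : (u ∈ s(a, b)) ↔ (u = a ⊓ b ∨ u = a ⊔ b) := by
      conv_lhs => rw [sym2_mk_eq_sorted a b]
      exact Sym2.mem_iff
    rw [inc_mk]
    by_cases h1 : u = a ⊓ b <;> by_cases h2 : u = a ⊔ b <;>
      simp_all

lemma inc_mul_inc_of_ne {e : Sym2 (Fin n)} (he : ¬ e.IsDiag) {u w : Fin n} (huw : u ≠ w) :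
    inc u e * inc w e = if e = s(u, w) then -1 else 0 := by
  induction e using Sym2.ind with
  | _ a b =>
    rw [Sym2.mk_isDiag_iff] at he
    have hxy := inf_ne_sup he
    rw [inc_mk, inc_mk]
    have heq : (s(a, b) = s(u, w)) ↔ ((a ⊓ b = u ∧ a ⊔ b = w) ∨ (a ⊓ b = w ∧ a ⊔ b = u)) := by
      conv_lhs => rw [sym2_mk_eq_sorted a b]
      exact Sym2.eq_iff
    simp only [heq]
    by_cases h1 : u = a ⊓ b <;> by_cases h2 : u = a ⊔ b <;>
      by_cases h3 : w = a ⊓ b <;> by_cases h4 : w = a ⊔ b <;>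
      simp_all [eq_comm] <;> ring

lemma lap_factor (G : SimpleGraph (Fin n)) [DecidableRel G.Adj] (v : Fin n) :
    (G.lapMatrix ℤ).submatrix
        (fun u : {u : Fin n // u ≠ v} => (u : Fin n))
        (fun u : {u : Fin n // u ≠ v} => (u : Fin n))
      = (Matrix.of fun (u : {u : Fin n // u ≠ v}) (e : ↥G.edgeFinset) => inc (↑u : Fin n) (↑e : Sym2 (Fin n)))
        * (Matrix.of fun (u : {u : Fin n // u ≠ v}) (e : ↥G.edgeFinset) => inc (↑u : Fin n) (↑e : Sym2 (Fin n)))ᵀ := by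
  classical
  ext u w
  rw [Matrix.mul_apply, Matrix.submatrix_apply]
  simp only [Matrix.of_apply, Matrix.transpose_apply]
  rw [Finset.sum_coe_sort G.edgeFinset (fun e => inc (↑u : Fin n) e * inc (↑w : Fin n) e)]
  have hlap : (G.lapMatrix ℤ) ↑u ↑w =
      (if (u : Fin n) = ↑w then (G.degree ↑u : ℤ) else 0) - (if G.Adj ↑u ↑w then 1 else 0) := by
    simp [lapMatrix, degMatrix, Matrix.diagonal, Matrix.sub_apply]
  rw [hlap]
  by_cases huw : (u : Fin n) = ↑w
  · rw [if_pos huw, ← huw]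
    have : ∀ e ∈ G.edgeFinset, inc (↑u : Fin n) e * inc ↑u e = if (↑u : Fin n) ∈ e then 1 else 0 :=
      fun e he => inc_self_mul_self (G.not_isDiag_of_mem_edgeSet (mem_edgeFinset.mp he)) _
    rw [Finset.sum_congr rfl this, Finset.sum_boole, ← incidenceFinset_eq_filter,
      card_incidenceFinset_eq_degree]
    simp [SimpleGraph.irrefl]
  · rw [if_neg huw]
    have : ∀ e ∈ G.edgeFinset, inc (↑u : Fin n) e * inc ↑w e
        = if e = s(↑u, ↑w) then (-1 : ℤ) else 0 :=
      fun e he => inc_mul_inc_of_ne (G.not_isDiag_of_mem_edgeSet (mem_edgeFinset.mp he)) huw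
    rw [Finset.sum_congr rfl this, Finset.sum_ite_eq' G.edgeFinset s(↑u, ↑w) (fun _ => (-1 : ℤ))]
    simp only [mem_edgeFinset, mem_edgeSet]
    split_ifs <;> ring

lemma detsq_one {v : Fin n} (φ : {u : Fin n // u ≠ v} → Sym2 (Fin n))
    (hinj : Function.Injective φ)
    (hconn : (fromEdgeSet (Set.range φ)).Connected) :
    (Matrix.det (Matrix.of fun u w : {u : Fin n // u ≠ v} => inc (↑u) (φ w))) ^ 2 = 1 := by
  classical
  set H := fromEdgeSet (Set.range φ) with hH
  set M : Matrix {u : Fin n // u ≠ v} {u : Fin n // u ≠ v} ℤ :=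
    Matrix.of fun u w => inc (↑u) (φ w) with hM
  have hsubE : H.edgeSet ⊆ Set.range φ := by
    rw [hH, edgeSet_fromEdgeSet]; exact Set.diff_subset
  set P : Matrix {u : Fin n // u ≠ v} {u : Fin n // u ≠ v} ℤ :=
    Matrix.of fun i u =>
      (((hconn.preconnected (↑u) v).some.darts).map
        (fun d => if d.edge = φ i then dsign d.fst d.snd else 0)).sum with hP
  have hMP : M * P = 1 := by
    ext u' u
    rw [Matrix.mul_apply, Matrix.one_apply]
    set L := (hconn.preconnected (↑u) v).some.darts with hL
    have step1 : ∀ i, M u' i * P i u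
        = (L.map (fun d => if d.edge = φ i then inc (↑u' : Fin n) (φ i) * dsign d.fst d.snd
            else 0)).sum := by
      intro i
      rw [hM, hP]
      simp only [Matrix.of_apply]
      rw [← List.sum_map_mul_left]
      congr 1
      apply List.map_congr_left
      intro d _
      split_ifs <;> ring
    rw [Finset.sum_congr rfl (fun i _ => step1 i), sum_list_swap]
    have step2 : ∀ d ∈ L, (∑ i : {u : Fin n // u ≠ v},
        if d.edge = φ i then inc (↑u' : Fin n) (φ i) * dsign d.fst d.snd else 0)
        = dsign d.fst d.snd * inc (↑u' : Fin n) d.edge := by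
      intro d _
      obtain ⟨i₀, hi₀⟩ := hsubE d.edge_mem
      rw [Finset.sum_eq_single i₀]
      · rw [if_pos hi₀.symm, hi₀]; ring
      · intro i _ hne
        rw [if_neg]
        intro h
        exact hne (hinj (h.symm.trans hi₀.symm))
      · intro h; exact absurd (Finset.mem_univ i₀) h
    rw [List.map_congr_left step2, walk_dart_sum]
    have huv : (↑u' : Fin n) ≠ v := u'.2
    rw [if_neg huv, sub_zero]
    by_cases h : u' = u
    · rw [if_pos h, if_pos (by rw [h])]
    · rw [if_neg h, if_neg (fun hc => h (Subtype.ext hc))]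
  have hdet : M.det * P.det = 1 := by rw [← Matrix.det_mul, hMP, Matrix.det_one]
  rcases Int.isUnit_iff.mp (IsUnit.of_mul_eq_one _ hdet) with h | h <;> rw [h] <;> norm_num

lemma det_zero_of_not_connected {v : Fin n} (φ : {u : Fin n // u ≠ v} → Sym2 (Fin n))
    (hconn : ¬ (fromEdgeSet (Set.range φ)).Connected) :
    Matrix.det (Matrix.of fun u w : {u : Fin n // u ≠ v} => inc (↑u) (φ w)) = 0 := by
  classical
  set H := fromEdgeSet (Set.range φ) with hH
  set M : Matrix {u : Fin n // u ≠ v} {u : Fin n // u ≠ v} ℤ :=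
    Matrix.of fun u w => inc (↑u) (φ w) with hM
  haveI : Nonempty (Fin n) := ⟨v⟩
  have hex : ∃ w₀ : Fin n, ¬ H.Reachable v w₀ := by
    by_contra h
    push_neg at h
    exact hconn ⟨fun a b => (h a).symm.trans (h b)⟩
  obtain ⟨w₀, hw₀⟩ := hex
  have hw₀v : w₀ ≠ v := by intro h; subst h; exact hw₀ (Reachable.refl w₀)
  set x : Fin n → ℤ := fun w => if H.Reachable w₀ w then 1 else 0 with hx
  have hxv : x v = 0 := if_neg (fun h => hw₀ h.symm)
  have hadj : ∀ a b : Fin n, H.Adj a b → x a = x b := by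
    intro a b hab
    have hr : H.Reachable a b := hab.reachable
    rw [hx]
    simp only
    by_cases h : H.Reachable w₀ a
    · rw [if_pos h, if_pos (h.trans hr)]
    · rw [if_neg h, if_neg (fun h' => h (h'.trans hr.symm))]
  have hinfsup : ∀ e : Sym2 (Fin n), e ∈ Set.range φ → x e.inf = x e.sup := by
    intro e he
    induction e using Sym2.ind with
    | _ a b =>
      by_cases hab : a = b
      · subst hab; simp
      · rw [Sym2.inf_mk, Sym2.sup_mk]
        apply hadj
        rw [hH, fromEdgeSet_adj]
        exact ⟨by rw [← sym2_mk_eq_sorted]; exact he, inf_ne_sup hab⟩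
  have key : ∀ i : {u : Fin n // u ≠ v},
      (∑ u : {u : Fin n // u ≠ v}, x ↑u * inc (↑u) (φ i)) = 0 := by
    intro i
    have hfull : (∑ w : Fin n, x w * inc w (φ i)) = x (φ i).inf - x (φ i).sup := by
      simp only [inc, mul_sub, mul_ite, mul_one, mul_zero, Finset.sum_sub_distrib]
      rw [Finset.sum_ite_eq' Finset.univ ((φ i).inf) x, Finset.sum_ite_eq' Finset.univ ((φ i).sup) x]
      simp
    have hsub : (∑ u : {u : Fin n // u ≠ v}, x ↑u * inc (↑u) (φ i))
        = ∑ w ∈ Finset.univ.erase v, x w * inc w (φ i) := by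
      rw [Finset.sum_subtype (p := fun u : Fin n => u ≠ v) (Finset.univ.erase v)
        (fun y => by simp) (fun w => x w * inc w (φ i))]
    rw [hsub]
    have h1 := Finset.sum_erase_add Finset.univ (fun w => x w * inc w (φ i)) (Finset.mem_univ v)
    have h2 : ∑ w ∈ Finset.univ.erase v, x w * inc w (φ i)
        = (∑ w : Fin n, x w * inc w (φ i)) - x v * inc v (φ i) := by
      rw [← h1]; ring
    rw [h2, hfull, hxv, hinfsup (φ i) ⟨i, rfl⟩]; ring
  set Mq : Matrix {u : Fin n // u ≠ v} {u : Fin n // u ≠ v} ℚ :=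
    Matrix.of fun u w => ((inc (↑u : Fin n) (φ w) : ℤ) : ℚ) with hMq
  have hdetq : Mq.det = 0 := by
    rw [← Matrix.exists_vecMul_eq_zero_iff]
    refine ⟨fun u => ((x ↑u : ℤ) : ℚ), ?_, ?_⟩
    · intro h0
      have h1 := congrFun h0 ⟨w₀, hw₀v⟩
      simp only [hx, Pi.zero_apply] at h1
      rw [if_pos (Reachable.refl w₀)] at h1
      norm_num at h1
    · funext i
      have hc : ((∑ u : {u : Fin n // u ≠ v}, x ↑u * inc (↑u) (φ i) : ℤ) : ℚ) = 0 := by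
        rw [key i]; norm_num
      push_cast at hc
      simp only [Matrix.vecMul, dotProduct, hMq, Matrix.of_apply, Pi.zero_apply]
      exact_mod_cast hc
  have hmapdet : ((M.det : ℤ) : ℚ) = Mq.det := by
    have h := RingHom.map_det (Int.castRingHom ℚ) M
    have h2 : (Int.castRingHom ℚ).mapMatrix M = Mq := by
      ext u w
      simp [hMq, hM]
    rw [h2] at h
    simpa using h
  rw [hdetq] at hmapdet
  exact_mod_cast hmapdet

section CB

variable {R E : Type*} [Fintype R] [Fintype E] [DecidableEq R] [DecidableEq E]


noncomputable def sel (S : Finset E) (hS : S.card = Fintype.card R) : R ≃ ↥S :=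
  (Fintype.equivOfCardEq (by rw [Fintype.card_coe, hS])).symm

lemma det_mul_transpose (A : Matrix R E ℤ) :
    (A * Aᵀ).det = ∑ S : Finset E,
      (if hS : S.card = Fintype.card R then
        (Matrix.det (Matrix.of fun u w : R => A u ↑(sel S hS w)))^2 else 0) := by
  classical
  -- Step 1: expand det via multilinearity in the rows
  have hrows : (A * Aᵀ) = fun u => ∑ e : E, A u e • (fun w => A w e) := by
    ext u w
    simp [Matrix.mul_apply, Finset.sum_apply]
  have h1 : (A * Aᵀ).det
      = ∑ r : R → E, (∏ u : R, A u (r u)) * Matrix.det (Matrix.of fun u w => A w (r u)) := by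
    have hms := (Matrix.detRowAlternating (R := ℤ) (n := R)).toMultilinearMap.map_sum
      (fun (u : R) (e : E) => A u e • (fun w => A w e))
    rw [AlternatingMap.coe_multilinearMap] at hms
    calc (A * Aᵀ).det = Matrix.detRowAlternating (A * Aᵀ) := rfl
      _ = Matrix.detRowAlternating (fun u => ∑ e : E, A u e • (fun w => A w e)) := by rw [hrows]
      _ = ∑ r : R → E, Matrix.detRowAlternating (fun u => A u (r u) • (fun w => A w (r u))) := hms
      _ = _ := by
          apply Finset.sum_congr rfl
          intro r _
          have hsm := (Matrix.detRowAlternating (R := ℤ) (n := R)).toMultilinearMap.map_smul_univ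
            (fun u => A u (r u)) (fun u => fun w => A w (r u))
          rw [AlternatingMap.coe_multilinearMap] at hsm
          rw [hsm, smul_eq_mul]
          rfl
  rw [h1]
  -- Step 2: non-injective terms vanish
  have h2 : ∀ r : R → E, ¬ Function.Injective r →
      (∏ u : R, A u (r u)) * Matrix.det (Matrix.of fun u w => A w (r u)) = 0 := by
    intro r hr
    simp only [Function.Injective, not_forall] at hr
    obtain ⟨u1, u2, heq, hne⟩ := hr
    rw [Matrix.det_zero_of_row_eq hne (by funext w; simp [heq]), mul_zero]
  rw [← Finset.sum_filter_of_ne (p := fun r : R → E => Function.Injective r)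
    (by intro r _ h; by_contra hc; exact h (h2 r hc))]
  -- Step 3: fiber over the image
  rw [← Finset.sum_fiberwise_of_maps_to (g := fun r : R → E => Finset.univ.image r)
    (t := Finset.univ) (fun r _ => Finset.mem_univ _)]
  apply Finset.sum_congr rfl
  intro S _
  by_cases hS : S.card = Fintype.card R
  · rw [dif_pos hS]
    have hmem : ∀ (σ : Equiv.Perm R), (fun u => (↑(sel S hS (σ u)) : E)) ∈
        (Finset.univ.filter (fun r : R → E => Function.Injective r)).filter
          (fun r => Finset.univ.image r = S) := by
      intro σ
      have hinj : Function.Injective (fun u => (↑(sel S hS (σ u)) : E)) :=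
        Subtype.coe_injective.comp ((sel S hS).injective.comp σ.injective)
      rw [Finset.mem_filter, Finset.mem_filter]
      refine ⟨⟨Finset.mem_univ _, hinj⟩, ?_⟩
      apply Finset.eq_of_subset_of_card_le
      · intro e he
        rw [Finset.mem_image] at he
        obtain ⟨u, _, rfl⟩ := he
        exact (sel S hS (σ u)).2
      · rw [Finset.card_image_of_injective _ hinj, Finset.card_univ, hS]
    have hsum : (∑ r ∈ (Finset.univ.filter (fun r : R → E => Function.Injective r)).filter
          (fun r => Finset.univ.image r = S),
          (∏ u : R, A u (r u)) * Matrix.det (Matrix.of fun u w => A w (r u)))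
        = ∑ σ : Equiv.Perm R,
          (∏ u : R, A u ↑(sel S hS (σ u)))
            * Matrix.det (Matrix.of fun u w => A w ↑(sel S hS (σ u))) := by
      refine (Finset.sum_bij'
        (i := fun (σ : Equiv.Perm R) (_ : σ ∈ Finset.univ) => fun u => (↑(sel S hS (σ u)) : E))
        (j := fun r hr => Equiv.ofBijective
          (fun u => (sel S hS).symm ⟨r u, by
            rw [Finset.mem_filter] at hr
            rw [← hr.2]
            exact Finset.mem_image_of_mem r (Finset.mem_univ u)⟩)
          (Finite.injective_iff_bijective.mp (by
            intro u1 u2 h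
            have h' := congrArg (fun z => (((sel S hS) z : ↥S) : E)) h
            simp only [Equiv.apply_symm_apply] at h'
            rw [Finset.mem_filter, Finset.mem_filter] at hr
            exact hr.1.2 h')))
        (fun σ _ => hmem σ) (fun r hr => Finset.mem_univ _)
        ?_ ?_ ?_).symm
      · intro σ _
        ext u
        simp [Equiv.ofBijective_apply]
      · intro r hr
        funext u
        simp [Equiv.ofBijective_apply]
      · intro σ _
        rfl
    rw [hsum]
    -- Step 4: extract signs
    set D : Matrix R R ℤ := Matrix.of fun p w => A w ↑(sel S hS p) with hD
    have hstep : ∀ σ : Equiv.Perm R,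
        (∏ u : R, A u ↑(sel S hS (σ u))) * Matrix.det (Matrix.of fun u w => A w ↑(sel S hS (σ u)))
          = (((Equiv.Perm.sign σ : ℤˣ) : ℤ) * ∏ u : R, D (σ u) u) * D.det := by
      intro σ
      have hsub : (Matrix.of fun u w => A w ↑(sel S hS (σ u))) = D.submatrix σ id := by
        ext u w
        simp [hD]
      rw [hsub, Matrix.det_permute]
      simp only [Int.cast_id]
      have hprod : (∏ u : R, A u ↑(sel S hS (σ u))) = ∏ u : R, D (σ u) u := by
        apply Finset.prod_congr rfl
        intro u _
        simp [hD]
      rw [hprod]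
      ring
    rw [Finset.sum_congr rfl (fun σ _ => hstep σ), ← Finset.sum_mul]
    have hdetD := Matrix.det_apply' D
    simp only [Int.cast_id] at hdetD
    rw [← hdetD]
    have hDT : Matrix.det (Matrix.of fun u w : R => A u ↑(sel S hS w)) = D.det := by
      rw [← Matrix.det_transpose D]
      congr 1
    rw [hDT]
    ring
  · rw [dif_neg hS]
    apply Finset.sum_eq_zero
    intro r hr
    rw [Finset.mem_filter, Finset.mem_filter] at hr
    exfalso
    apply hS
    rw [← hr.2, Finset.card_image_of_injective _ hr.1.2, Finset.card_univ]

end CB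


lemma exists_tree_le_aux {V : Type*} [Fintype V] :
    ∀ (m : ℕ) (G : SimpleGraph V), G.Connected → G.edgeSet.ncard ≤ m →
      ∃ T : SimpleGraph V, T ≤ G ∧ T.IsTree := by
  intro m
  induction m with
  | zero =>
    intro G hconn hcard
    refine ⟨G, le_refl G, hconn, ?_⟩
    intro v c hc
    have hempty : G.edgeSet = ∅ :=
      (Set.ncard_eq_zero (G.edgeSet.toFinite)).mp (Nat.le_zero.mp hcard)
    cases c with
    | nil => exact hc.not_of_nil
    | cons h p =>
      exact absurd ((G.mem_edgeSet).mpr h) (by rw [hempty]; exact Set.notMem_empty _)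
  | succ m ih =>
    intro G hconn hcard
    by_cases hac : G.IsAcyclic
    · exact ⟨G, le_refl G, hconn, hac⟩
    · rw [isAcyclic_iff_forall_edge_isBridge] at hac
      push_neg at hac
      obtain ⟨e, he, hnb⟩ := hac
      induction e using Sym2.ind with
      | _ a b =>
        set G' := G \ fromEdgeSet {s(a, b)} with hG'
        have hadj : G.Adj a b := (mem_edgeSet G).mp he
        have hreach : G'.Reachable a b := by
          rw [isBridge_iff] at hnb
          push_neg at hnb
          exact hnb
        have hpre : ∀ u w : V, G.Adj u w → G'.Reachable u w := by
          intro u w huw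
          by_cases hcase : s(u, w) = s(a, b)
          · rw [Sym2.eq_iff] at hcase
            rcases hcase with ⟨rfl, rfl⟩ | ⟨rfl, rfl⟩
            · exact hreach
            · exact hreach.symm
          · refine SimpleGraph.Adj.reachable ?_
            rw [hG', SimpleGraph.sdiff_adj]
            refine ⟨huw, ?_⟩
            rw [fromEdgeSet_adj]
            intro hmem
            exact hcase (Set.mem_singleton_iff.mp hmem.1)
        have htrans : ∀ (u w : V) (p : G.Walk u w), G'.Reachable u w := by
          intro u w p
          induction p with
          | nil => exact Reachable.refl _
          | cons h q ihp => exact (hpre _ _ h).trans ihp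
        have hconn' : G'.Connected := by
          haveI : Nonempty V := hconn.nonempty
          exact ⟨fun u w => htrans u w (hconn.preconnected u w).some⟩
        have hcard' : G'.edgeSet.ncard ≤ m := by
          have hes : G'.edgeSet = G.edgeSet \ {s(a, b)} := by
            rw [hG', edgeSet_sdiff, edgeSet_fromEdgeSet]
            ext f
            simp only [Set.mem_diff, Set.mem_singleton_iff, Set.mem_setOf_eq]
            constructor
            · rintro ⟨hf, hf2⟩
              refine ⟨hf, fun hfe => hf2 ⟨hfe, ?_⟩⟩
              subst hfe
              exact G.not_isDiag_of_mem_edgeSet hf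
            · rintro ⟨hf, hf2⟩
              exact ⟨hf, fun h => hf2 h.1⟩
          rw [hes]
          have h1 : (G.edgeSet \ {s(a, b)}).ncard + 1 = G.edgeSet.ncard :=
            Set.ncard_diff_singleton_add_one he (G.edgeSet.toFinite)
          omega
        obtain ⟨T, hTle, hT⟩ := ih G' hconn' hcard'
        exact ⟨T, le_trans hTle sdiff_le, hT⟩

lemma isTree_of_connected_ncard {V : Type*} [Fintype V] (H : SimpleGraph V)
    (hconn : H.Connected) (hcard : H.edgeSet.ncard + 1 = Fintype.card V) : H.IsTree := by
  classical
  obtain ⟨T, hTle, hT⟩ := exists_tree_le_aux H.edgeSet.ncard H hconn le_rfl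
  haveI : Fintype T.edgeSet := Set.Finite.fintype (Set.toFinite _)
  haveI : Fintype H.edgeSet := Set.Finite.fintype (Set.toFinite _)
  have hTcard := hT.card_edgeFinset
  have hTn : T.edgeSet.ncard + 1 = Fintype.card V := by
    rwa [Set.ncard_eq_toFinset_card' T.edgeSet]
  have hsub : T.edgeSet ⊆ H.edgeSet := edgeSet_subset_edgeSet.mpr hTle
  have hHn : H.edgeSet.ncard = H.edgeFinset.card := Set.ncard_eq_toFinset_card' H.edgeSet
  have heq : T.edgeSet = H.edgeSet :=
    Set.eq_of_subset_of_ncard_le hsub (by omega) (Set.toFinite _)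
  have : T = H := by
    rw [← fromEdgeSet_edgeSet T, ← fromEdgeSet_edgeSet H, heq]
  rwa [← this]


lemma edgeSet_fromEdgeSet_of_subset {V : Type*} (G : SimpleGraph V) {s : Set (Sym2 V)}
    (h : s ⊆ G.edgeSet) : (SimpleGraph.fromEdgeSet s).edgeSet = s := by
  rw [SimpleGraph.edgeSet_fromEdgeSet]
  ext e
  constructor
  · exact fun he => he.1
  · exact fun he => ⟨he, fun hdiag => G.not_isDiag_of_mem_edgeSet (h he) hdiag⟩

end MTT


/-- The number of spanning trees of `G`. -/
noncomputable def spanningTreeCount {V : Type*} (G : SimpleGraph V) : ℕ :=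
  {H : SimpleGraph V | H ≤ G ∧ H.IsTree}.ncard

/-- The Matrix Tree Theorem: for a simple graph `G` on `n ≥ 2` vertices and any
vertex `v`, the number of spanning trees of `G` equals the determinant of the
matrix obtained from the Laplacian by deleting the row and column indexed by `v`. -/
theorem matrix_tree_theorem (n : ℕ) (hn : 2 ≤ n) (G : SimpleGraph (Fin n))
    [DecidableRel G.Adj] (v : Fin n) :
    (spanningTreeCount G : ℤ) =
      Matrix.det ((G.lapMatrix ℤ).submatrix
        (fun u : {u : Fin n // u ≠ v} => (u : Fin n))
        (fun u : {u : Fin n // u ≠ v} => (u : Fin n))) := by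
  classical
  have hcardR : Fintype.card {u : Fin n // u ≠ v} = n - 1 := by
    have h1 : Fintype.card {u : Fin n // ¬ u = v} = Fintype.card (Fin n)
        - Fintype.card {u : Fin n // u = v} := Fintype.card_subtype_compl _
    rw [Fintype.card_subtype_eq, Fintype.card_fin] at h1
    exact h1
  set A : Matrix {u : Fin n // u ≠ v} ↥G.edgeFinset ℤ :=
    Matrix.of fun (u : {u : Fin n // u ≠ v}) (e : ↥G.edgeFinset) =>
      MTT.inc (↑u : Fin n) (↑e : Sym2 (Fin n)) with hA
  rw [MTT.lap_factor G v, MTT.det_mul_transpose A]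
  set cval := Fintype.card {u : Fin n // u ≠ v} with hcval
  have hterm : ∀ S : Finset ↥G.edgeFinset,
      (if hS : S.card = cval then
        (Matrix.det (Matrix.of fun u w : {u : Fin n // u ≠ v} => A u ↑(MTT.sel S hS w)))^2 else 0)
      = if S.card = cval ∧
          (SimpleGraph.fromEdgeSet
            (↑(S.image (fun e : ↥G.edgeFinset => (e : Sym2 (Fin n)))) : Set (Sym2 (Fin n)))).Connected
        then 1 else 0 := by
    intro S
    by_cases hS : S.card = cval
    · rw [dif_pos hS]
      set φ : {u : Fin n // u ≠ v} → Sym2 (Fin n) :=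
        fun w => ((MTT.sel S hS w : ↥G.edgeFinset) : Sym2 (Fin n)) with hφ
      have hφinj : Function.Injective φ := by
        intro a b hab
        exact (MTT.sel S hS).injective (Subtype.coe_injective (Subtype.coe_injective hab))
      have hrange : Set.range φ
          = (↑(S.image (fun e : ↥G.edgeFinset => (e : Sym2 (Fin n)))) : Set (Sym2 (Fin n))) := by
        ext e
        simp only [Set.mem_range, Finset.coe_image, Set.mem_image, Finset.mem_coe]
        constructor
        · rintro ⟨w, rfl⟩
          exact ⟨(MTT.sel S hS w : ↥G.edgeFinset), (MTT.sel S hS w).2, rfl⟩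
        · rintro ⟨f, hf, rfl⟩
          exact ⟨(MTT.sel S hS).symm ⟨f, hf⟩, by rw [hφ]; simp⟩
      have hmat : (Matrix.of fun u w : {u : Fin n // u ≠ v} => A u ↑(MTT.sel S hS w))
          = Matrix.of fun u w : {u : Fin n // u ≠ v} => MTT.inc (↑u) (φ w) := rfl
      by_cases hc : (SimpleGraph.fromEdgeSet
          (↑(S.image (fun e : ↥G.edgeFinset => (e : Sym2 (Fin n)))) : Set (Sym2 (Fin n)))).Connected
      · rw [if_pos ⟨hS, hc⟩, hmat]
        exact MTT.detsq_one φ hφinj (by rw [hrange]; exact hc)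
      · rw [if_neg (by tauto), hmat,
          MTT.det_zero_of_not_connected φ (by rw [hrange]; exact hc)]
        norm_num
    · rw [dif_neg hS, if_neg (by tauto)]
  rw [Finset.sum_congr rfl (fun S _ => hterm S), Finset.sum_boole]
  congr 1
  rw [spanningTreeCount]
  have hset : {H : SimpleGraph (Fin n) | H ≤ G ∧ H.IsTree}
      = ↑(Finset.univ.filter (fun H : SimpleGraph (Fin n) => H ≤ G ∧ H.IsTree)) := by
    ext H; simp
  rw [hset, Set.ncard_coe_finset]
  refine (Finset.card_bij
    (i := fun (S : Finset ↥G.edgeFinset) (_ : S ∈ Finset.univ.filter (fun S => S.card = cval ∧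
      (SimpleGraph.fromEdgeSet
        (↑(S.image (fun e : ↥G.edgeFinset => (e : Sym2 (Fin n)))) : Set (Sym2 (Fin n)))).Connected))
      => SimpleGraph.fromEdgeSet
        (↑(S.image (fun e : ↥G.edgeFinset => (e : Sym2 (Fin n)))) : Set (Sym2 (Fin n))))
    ?_ ?_ ?_).symm
  · intro S hSmem
    rw [Finset.mem_filter] at hSmem
    obtain ⟨hScard, hSconn⟩ := hSmem.2
    have hsubset : (↑(S.image (fun e : ↥G.edgeFinset => (e : Sym2 (Fin n)))) : Set (Sym2 (Fin n)))
        ⊆ G.edgeSet := by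
      intro e he
      simp only [Finset.coe_image, Set.mem_image, Finset.mem_coe] at he
      obtain ⟨f, _, rfl⟩ := he
      exact (SimpleGraph.mem_edgeFinset).mp f.2
    have hedgeSet : (SimpleGraph.fromEdgeSet
        (↑(S.image (fun e : ↥G.edgeFinset => (e : Sym2 (Fin n)))) : Set (Sym2 (Fin n)))).edgeSet
        = (↑(S.image (fun e : ↥G.edgeFinset => (e : Sym2 (Fin n)))) : Set (Sym2 (Fin n))) := by
      exact MTT.edgeSet_fromEdgeSet_of_subset G hsubset
    rw [Finset.mem_filter]
    refine ⟨Finset.mem_univ _, ?_, ?_⟩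
    · intro a b hab
      rw [SimpleGraph.fromEdgeSet_adj] at hab
      exact (SimpleGraph.mem_edgeSet G).mp (hsubset hab.1)
    · apply MTT.isTree_of_connected_ncard _ hSconn
      rw [hedgeSet, Set.ncard_coe_finset,
        Finset.card_image_of_injective _ Subtype.coe_injective, hScard, hcardR,
        Fintype.card_fin]
      omega
  · intro S1 hS1 S2 hS2 heq
    have h1 := congrArg SimpleGraph.edgeSet heq
    have hsubset : ∀ (S : Finset ↥G.edgeFinset),
        (↑(S.image (fun e : ↥G.edgeFinset => (e : Sym2 (Fin n)))) : Set (Sym2 (Fin n)))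
        ⊆ G.edgeSet := by
      intro S e he
      simp only [Finset.coe_image, Set.mem_image, Finset.mem_coe] at he
      obtain ⟨f, _, rfl⟩ := he
      exact (SimpleGraph.mem_edgeFinset).mp f.2
    rw [MTT.edgeSet_fromEdgeSet_of_subset G (hsubset S1),
      MTT.edgeSet_fromEdgeSet_of_subset G (hsubset S2)] at h1
    have h2 : S1.image (fun e : ↥G.edgeFinset => (e : Sym2 (Fin n)))
        = S2.image (fun e : ↥G.edgeFinset => (e : Sym2 (Fin n))) := Finset.coe_inj.mp h1
    exact Finset.image_injective Subtype.coe_injective h2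
  · intro H hH
    rw [Finset.mem_filter] at hH
    obtain ⟨hle, hT⟩ := hH.2
    set S : Finset ↥G.edgeFinset :=
      Finset.univ.filter (fun e : ↥G.edgeFinset => (↑e : Sym2 (Fin n)) ∈ H.edgeSet) with hSdef
    have himg : (↑(S.image (fun e : ↥G.edgeFinset => (e : Sym2 (Fin n)))) : Set (Sym2 (Fin n)))
        = H.edgeSet := by
      ext e
      simp only [Finset.coe_image, Set.mem_image, Finset.mem_coe, hSdef, Finset.mem_filter,
        Finset.mem_univ, true_and]
      constructor
      · rintro ⟨f, hf, rfl⟩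
        exact hf
      · intro he
        have heG : e ∈ G.edgeFinset :=
          (SimpleGraph.mem_edgeFinset).mpr (SimpleGraph.edgeSet_subset_edgeSet.mpr hle he)
        exact ⟨⟨e, heG⟩, he, rfl⟩
    have hfrom : SimpleGraph.fromEdgeSet
        (↑(S.image (fun e : ↥G.edgeFinset => (e : Sym2 (Fin n)))) : Set (Sym2 (Fin n))) = H := by
      rw [himg, SimpleGraph.fromEdgeSet_edgeSet]
    haveI : Fintype ↥H.edgeSet := Set.Finite.fintype (Set.toFinite _)
    have hcardH := hT.card_edgeFinset
    have hncard : H.edgeSet.ncard = H.edgeFinset.card := Set.ncard_eq_toFinset_card' H.edgeSet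
    have hScard : S.card = cval := by
      have h1 : (S.image (fun e : ↥G.edgeFinset => (e : Sym2 (Fin n)))).card = S.card :=
        Finset.card_image_of_injective _ Subtype.coe_injective
      have h2 : (↑(S.image (fun e : ↥G.edgeFinset => (e : Sym2 (Fin n)))) : Set (Sym2 (Fin n))).ncard
          = (S.image (fun e : ↥G.edgeFinset => (e : Sym2 (Fin n)))).card :=
        Set.ncard_coe_finset _
      rw [himg] at h2
      rw [hcardR]
      rw [Fintype.card_fin] at hcardH
      omega
    refine ⟨S, Finset.mem_filter.mpr ⟨Finset.mem_univ _, hScard, ?_⟩, hfrom⟩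
    rw [hfrom]
    exact hT.isConnected
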